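/- Let ξ be a binomial-type sum: ξ = (N - t)L + tH where t ~ Binomial(N, 1-β), L = μ - σ·sqrt((1-β)/β), H = μ + σ·sqrt(β/(1-β)). If β ∈ [δ_k, δ_{k-1}] (so that (N-t)L + tH > 0 iff t ≥ k), then E[ξ⁺] = Nσ·sqrt(β(1-β))·C(N-1, k-1)·(1-β)^{k-1}β^{N-k} + Nμ·Σ_{t=k}^{N} C(N,t)·β^{N-t}(1-β)^t. -/

import Mathlib

open MeasureTheory ProbabilityTheory Real Finset

private lemma tele_sum (f : ℕ → ℝ) (k N : ℕ) (hkN : k ≤ N) :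
    ∑ j ∈ Finset.Icc k N, (f (j - 1) - f j) = f (k - 1) - f N := by
  induction N, hkN using Nat.le_induction with
  | base => simp
  | succ n hn ih =>
      rw [Finset.sum_Icc_succ_top (by omega), ih]
      have : n + 1 - 1 = n := by omega
      rw [this]; ring

/-- Piece-wise expected loss under the endogenous binomial distribution:
if `ξ = (N - t)L + tH` with `t ~ Binomial(N, 1-β)` and `k` is such that
`(N-t)L + tH > 0` iff `t ≥ k`, then
`E[ξ⁺] = Nσ√(β(1-β))·C(N-1,k-1)(1-β)^{k-1}β^{N-k} + Nμ·Σ_{t=k}^N C(N,t)β^{N-t}(1-β)^t`. -/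
theorem expected_loss_piecewise {Ω : Type*} [MeasureSpace Ω]
    [IsProbabilityMeasure (ℙ : Measure Ω)]
    (N k : ℕ) (hN : 1 ≤ N) (hk1 : 1 ≤ k) (hkN : k ≤ N)
    (β μ σ : ℝ) (hβ0 : 0 < β) (hβ1 : β < 1) (hσ : 0 < σ)
    (t : Ω → ℕ) (hmeas : Measurable t) (htN : ∀ ω, t ω ≤ N)
    (hbin : ∀ j : ℕ, j ≤ N →
      ℙ {ω | t ω = j} = ENNReal.ofReal ((N.choose j : ℝ) * β ^ (N - j) * (1 - β) ^ j))
    (L H : ℝ)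
    (hL : L = μ - σ * Real.sqrt ((1 - β) / β))
    (hH : H = μ + σ * Real.sqrt (β / (1 - β)))
    (hthreshold : ∀ j : ℕ, j ≤ N → (0 < ((N : ℝ) - j) * L + j * H ↔ k ≤ j)) :
    ∫ ω, max (((N : ℝ) - t ω) * L + (t ω : ℝ) * H) 0 ∂ℙ
      = N * σ * Real.sqrt (β * (1 - β)) *
          ((N - 1).choose (k - 1) : ℝ) * (1 - β) ^ (k - 1) * β ^ (N - k)
        + N * μ * ∑ j ∈ Finset.Icc k N,
            (N.choose j : ℝ) * β ^ (N - j) * (1 - β) ^ j := by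
  have hβ' : (0 : ℝ) < 1 - β := by linarith
  set s : ℝ := Real.sqrt (β * (1 - β)) with hs
  set s1 : ℝ := Real.sqrt (β / (1 - β)) with hs1
  set s2 : ℝ := Real.sqrt ((1 - β) / β) with hs2
  set g : ℕ → ℝ := fun j => max (((N : ℝ) - j) * L + j * H) 0 with hg
  set p : ℕ → ℝ := fun j => (N.choose j : ℝ) * β ^ (N - j) * (1 - β) ^ j with hp
  have hp0 : ∀ j, 0 ≤ p j := fun j => by
    have := hβ0.le; have := hβ'.le
    positivity
  have hmeas' : ∀ j : ℕ, MeasurableSet {ω | t ω = j} :=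
    fun j => hmeas (measurableSet_singleton j)
  -- sqrt facts
  have hs1s : s1 * (1 - β) = s := by
    rw [hs1, hs, show β * (1 - β) = β / (1 - β) * (1 - β) ^ 2 by field_simp,
      Real.sqrt_mul (div_nonneg hβ0.le hβ'.le), Real.sqrt_sq hβ'.le]
  have hs2s : s2 * β = s := by
    rw [hs2, hs, show β * (1 - β) = (1 - β) / β * β ^ 2 by field_simp,
      Real.sqrt_mul (div_nonneg hβ'.le hβ0.le), Real.sqrt_sq hβ0.le]
  -- step 1 : integral as a finite sum
  have hrepr : ∀ ω, g (t ω) =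
      ∑ j ∈ Finset.range (N + 1), Set.indicator {ω' | t ω' = j} (fun _ => g j) ω := by
    intro ω
    rw [Finset.sum_eq_single (t ω)]
    · rw [Set.indicator_of_mem (by simp)]
    · intro j _ hj
      exact Set.indicator_of_notMem (by simp [Ne.symm hj]) _
    · intro h
      exact absurd (Finset.mem_range.mpr (Nat.lt_succ_of_le (htN ω))) h
  have hint : ∫ ω, g (t ω) ∂ℙ = ∑ j ∈ Finset.range (N + 1), g j * p j := by
    calc ∫ ω, g (t ω) ∂ℙ
        = ∫ ω, ∑ j ∈ Finset.range (N + 1),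
            Set.indicator {ω' | t ω' = j} (fun _ => g j) ω ∂ℙ := by
          exact integral_congr_ae (Filter.Eventually.of_forall hrepr)
      _ = ∑ j ∈ Finset.range (N + 1),
            ∫ ω, Set.indicator {ω' | t ω' = j} (fun _ => g j) ω ∂ℙ := by
          apply integral_finset_sum
          intro j _
          exact (integrable_const (g j)).indicator (hmeas' j)
      _ = ∑ j ∈ Finset.range (N + 1), g j * p j := by
          refine Finset.sum_congr rfl fun j hj => ?_
          rw [integral_indicator_const _ (hmeas' j), measureReal_def,
            hbin j (Nat.lt_succ_iff.mp (Finset.mem_range.mp hj)),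
            ENNReal.toReal_ofReal (hp0 j), smul_eq_mul, mul_comm]
  -- step 2 : restrict the sum to Icc k N
  have hIcc : ∑ j ∈ Finset.range (N + 1), g j * p j
      = ∑ j ∈ Finset.Icc k N, (((N : ℝ) - j) * L + j * H) * p j := by
    have hsub : Finset.Icc k N ⊆ Finset.range (N + 1) := fun j hj =>
      Finset.mem_range.mpr (Nat.lt_succ_of_le (Finset.mem_Icc.mp hj).2)
    rw [← Finset.sum_subset hsub (fun j hj hj' => ?_)]
    · refine Finset.sum_congr rfl fun j hj => ?_
      simp only [Finset.mem_Icc] at hj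
      have hpos : 0 < ((N : ℝ) - j) * L + j * H := (hthreshold j hj.2).mpr hj.1
      have : g j = ((N : ℝ) - j) * L + j * H := max_eq_left hpos.le
      rw [this]
    · simp only [Finset.mem_range, Finset.mem_Icc, not_and_or, not_le] at hj hj'
      have hjN : j ≤ N := by omega
      have hjk : j < k := by omega
      have hle : ((N : ℝ) - j) * L + j * H ≤ 0 := by
        by_contra h
        push_neg at h
        exact absurd ((hthreshold j hjN).mp h) (by omega)
      have : g j = 0 := max_eq_right hle
      rw [this, zero_mul]
  -- step 3 : per-term algebra and telescoping
  set a : ℕ → ℝ := fun i =>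
    (N : ℝ) * s * ((N - 1).choose i : ℝ) * β ^ (N - 1 - i) * (1 - β) ^ i with ha
  have claimA : ∀ j, 1 ≤ j → j ≤ N → (j : ℝ) * s1 * p j = a (j - 1) := by
    intro j hj1 hjN
    have hcast : ((N : ℝ) * ((N - 1).choose (j - 1) : ℝ)) = (j : ℝ) * (N.choose j : ℝ) := by
      have h := Nat.add_one_mul_choose_eq (N - 1) (j - 1)
      have h1 : N - 1 + 1 = N := by omega
      have h2 : j - 1 + 1 = j := by omega
      rw [h1, h2] at h
      have h' := congrArg (Nat.cast (R := ℝ)) h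
      push_cast at h'
      linarith [h']
    have hpow1 : (1 - β) ^ j = (1 - β) * (1 - β) ^ (j - 1) := by
      rw [← pow_succ']
      congr 1
      omega
    have hpow2 : N - j = N - 1 - (j - 1) := by omega
    rw [ha, hp]
    simp only
    rw [hpow2]
    calc (j : ℝ) * s1 * ((N.choose j : ℝ) * β ^ (N - 1 - (j - 1)) * (1 - β) ^ j)
        = ((j : ℝ) * (N.choose j : ℝ)) * β ^ (N - 1 - (j - 1)) *
            (s1 * (1 - β)) * (1 - β) ^ (j - 1) := by rw [hpow1]; ring
      _ = (N : ℝ) * s * ((N - 1).choose (j - 1) : ℝ) * β ^ (N - 1 - (j - 1)) *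
            (1 - β) ^ (j - 1) := by rw [hs1s, ← hcast]; ring
  have claimB : ∀ j, j ≤ N → ((N : ℝ) - j) * s2 * p j = a j := by
    intro j hjN
    rcases eq_or_lt_of_le hjN with heq | hlt
    · have h0 : (N - 1).choose N = 0 := Nat.choose_eq_zero_of_lt (by omega)
      rw [heq, ha, hp]
      simp [h0]
    · have hcast : ((N : ℝ) * ((N - 1).choose j : ℝ)) = ((N : ℝ) - j) * (N.choose j : ℝ) := by
        have h := Nat.add_one_mul_choose_eq (N - 1) j
        have h1 : N - 1 + 1 = N := by omega
        rw [h1] at h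
        have h2 := Nat.choose_succ_right_eq N j
        have h3 : N * (N - 1).choose j = N.choose j * (N - j) := h.trans h2
        have h' := congrArg (Nat.cast (R := ℝ)) h3
        push_cast [Nat.cast_sub hjN] at h'
        linarith [h']
      have hpow1 : β ^ (N - j) = β * β ^ (N - 1 - j) := by
        rw [← pow_succ']
        congr 1
        omega
      rw [ha, hp]
      simp only
      calc ((N : ℝ) - j) * s2 * ((N.choose j : ℝ) * β ^ (N - j) * (1 - β) ^ j)
          = (((N : ℝ) - j) * (N.choose j : ℝ)) * (s2 * β) * β ^ (N - 1 - j) *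
              (1 - β) ^ j := by rw [hpow1]; ring
        _ = (N : ℝ) * s * ((N - 1).choose j : ℝ) * β ^ (N - 1 - j) * (1 - β) ^ j := by
            rw [hs2s, ← hcast]; ring
  have hterm : ∀ j ∈ Finset.Icc k N,
      (((N : ℝ) - j) * L + j * H) * p j = (N : ℝ) * μ * p j + σ * (a (j - 1) - a j) := by
    intro j hj
    simp only [Finset.mem_Icc] at hj
    have hA := claimA j (le_trans hk1 hj.1) hj.2
    have hB := claimB j hj.2
    rw [hL, hH]
    have : (((N : ℝ) - j) * (μ - σ * s2) + j * (μ + σ * s1)) * p j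
        = (N : ℝ) * μ * p j + σ * ((j : ℝ) * s1 * p j - ((N : ℝ) - j) * s2 * p j) := by
      ring
    rw [this, hA, hB]
  have hsum : ∑ j ∈ Finset.Icc k N, (((N : ℝ) - j) * L + j * H) * p j
      = (N : ℝ) * μ * (∑ j ∈ Finset.Icc k N, p j) + σ * (a (k - 1) - a N) := by
    rw [Finset.sum_congr rfl hterm, Finset.sum_add_distrib, ← Finset.mul_sum,
      ← Finset.mul_sum, tele_sum a k N hkN]
  have haN : a N = 0 := by
    have : (N - 1).choose N = 0 := Nat.choose_eq_zero_of_lt (by omega)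
    rw [ha]; simp [this]
  have hak : a (k - 1) = (N : ℝ) * s * ((N - 1).choose (k - 1) : ℝ) *
      β ^ (N - k) * (1 - β) ^ (k - 1) := by
    have he : N - 1 - (k - 1) = N - k := by omega
    rw [ha]
    simp only [he]
  rw [show (fun ω => max (((N : ℝ) - t ω) * L + (t ω : ℝ) * H) 0) = fun ω => g (t ω) from rfl]
  rw [hint, hIcc, hsum, haN, hak, hp]
  ring
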